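/- Let p be a prime, n ≥ 1, α > 0, N ∈ ℤ, Ω = B_N ⊆ ℚ_p^n, f ∈ L²(Ω), g ∈ L¹(Ω^c). If u₁ ∈ H^α_g(Ω) and u₂ ∈ H^α_g(Ω) are both weak solutions of the Neumann problem D^{α,n}u = f on Ω, N_α u = g on Ω^c, then there is a constant c ∈ ℝ such that u₁ − u₂ = c almost everywhere on K^n; that is, the weak solution is unique up to an additive constant. -/
import Mathlib


noncomputable section

open MeasureTheory Metric ENNReal

instance (p : ℕ) [Fact p.Prime] : MeasurableSpace ℚ_[p] := borel _
instance (p : ℕ) [Fact p.Prime] : BorelSpace ℚ_[p] := ⟨rfl⟩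

/-- The closed unit ball `ℤ_p ⊆ ℚ_p` as a positive compact set. -/
def padicUnitBall (p : ℕ) [Fact p.Prime] : TopologicalSpace.PositiveCompacts ℚ_[p] where
  carrier := Metric.closedBall 0 1
  isCompact' := isCompact_closedBall 0 1
  interior_nonempty' := by
    rw [IsOpen.interior_eq (IsUltrametricDist.isOpen_closedBall 0 one_ne_zero)]
    exact ⟨0, Metric.mem_closedBall_self zero_le_one⟩

/-- Additive Haar measure on `ℚ_p`, normalized so that `ℤ_p` has measure `1`. -/
def padicHaar (p : ℕ) [Fact p.Prime] : Measure ℚ_[p] :=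
  Measure.addHaarMeasure (padicUnitBall p)

/-- The product Haar measure on `K^n = ℚ_p^n`, normalized so that `ℤ_p^n` has measure `1`. -/
def padicHaarN (p : ℕ) [Fact p.Prime] (n : ℕ) : Measure (Fin n → ℚ_[p]) :=
  Measure.pi fun _ => padicHaar p

/-- The ball `B_N = {x ∈ K^n : ‖x‖ ≤ p^N}`, where `‖x‖ = max |x_j|_p` is the sup norm. -/
def Bball (p : ℕ) [Fact p.Prime] (n : ℕ) (N : ℤ) : Set (Fin n → ℚ_[p]) :=
  {x | ‖x‖ ≤ (p : ℝ) ^ N}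

/-- The constant `c_{n,α} = (p^α − 1)/(1 − p^{−α−n})`. -/
def cna (p n : ℕ) (α : ℝ) : ℝ := ((p : ℝ) ^ α - 1) / (1 - (p : ℝ) ^ (-α - (n : ℝ)))

/-- The Vladimirov–Taibleson operator `(D^{α,n}u)(x) = c_{n,α} ∫ (u(x)−u(y))/‖x−y‖^{n+α} dy`. -/
def Dop (p : ℕ) [Fact p.Prime] (n : ℕ) (α : ℝ) (u : (Fin n → ℚ_[p]) → ℝ)
    (x : Fin n → ℚ_[p]) : ℝ :=
  cna p n α * ∫ y, (u x - u y) / ‖x - y‖ ^ ((n : ℝ) + α) ∂padicHaarN p n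

/-- The nonlocal normal derivative `(N_α u)(x) = c_{n,α} ∫_Ω (u(x)−u(y))/‖x−y‖^{n+α} dy`. -/
def Nop (p : ℕ) [Fact p.Prime] (n : ℕ) (α : ℝ) (N : ℤ) (u : (Fin n → ℚ_[p]) → ℝ)
    (x : Fin n → ℚ_[p]) : ℝ :=
  cna p n α * ∫ y in Bball p n N, (u x - u y) / ‖x - y‖ ^ ((n : ℝ) + α) ∂padicHaarN p n

/-- The squared norm of the space `H^α_ρ(Ω)`, `Ω = B_N` (value in `[0,∞]`). -/
def normSqH (p : ℕ) [Fact p.Prime] (n : ℕ) (α : ℝ) (N : ℤ)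
    (ρ u : (Fin n → ℚ_[p]) → ℝ) : ℝ≥0∞ :=
  (∫⁻ x in Bball p n N, ENNReal.ofReal ((u x) ^ 2) ∂padicHaarN p n)
  + (∫⁻ x in (Bball p n N)ᶜ, ENNReal.ofReal (|ρ x| * (u x) ^ 2) ∂padicHaarN p n)
  + ∫⁻ z in ((Bball p n N)ᶜ ×ˢ (Bball p n N)ᶜ)ᶜ,
      ENNReal.ofReal ((u z.1 - u z.2) ^ 2 / ‖z.1 - z.2‖ ^ ((n : ℝ) + α))
      ∂((padicHaarN p n).prod (padicHaarN p n))

/-- Membership in `H^α_ρ(Ω)`: measurable with finite `H^α_ρ(Ω)`-norm. -/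
def MemH (p : ℕ) [Fact p.Prime] (n : ℕ) (α : ℝ) (N : ℤ)
    (ρ u : (Fin n → ℚ_[p]) → ℝ) : Prop :=
  Measurable u ∧ normSqH p n α N ρ u < ⊤

/-- `u` is a weak solution of the Neumann problem `D^{α,n}u = f` on `Ω`,
`N_α u = g` on `Ω^c`, where `Ω = B_N`. -/
def IsWeakSolution (p : ℕ) [Fact p.Prime] (n : ℕ) (α : ℝ) (N : ℤ)
    (f g u : (Fin n → ℚ_[p]) → ℝ) : Prop :=
  MemH p n α N g u ∧
  ∀ v : (Fin n → ℚ_[p]) → ℝ, MemH p n α N g v →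
    cna p n α / 2 *
      ∫ z in ((Bball p n N)ᶜ ×ˢ (Bball p n N)ᶜ)ᶜ,
        (u z.1 - u z.2) * (v z.1 - v z.2) / ‖z.1 - z.2‖ ^ ((n : ℝ) + α)
        ∂((padicHaarN p n).prod (padicHaarN p n))
    = (∫ x in Bball p n N, f x * v x ∂padicHaarN p n)
      + ∫ y in (Bball p n N)ᶜ, g y * v y ∂padicHaarN p n

lemma aux_fin {X : Type*} [MeasurableSpace X] (ν : Measure X) (c U V : X → ℝ)
    (hc : ∀ x, 0 ≤ c x)
    (hm : Measurable fun x => c x * (U x) ^ 2)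
    (hm' : Measurable fun x => c x * (V x) ^ 2)
    (hU : ∫⁻ x, ENNReal.ofReal (c x * (U x) ^ 2) ∂ν < ⊤)
    (hV : ∫⁻ x, ENNReal.ofReal (c x * (V x) ^ 2) ∂ν < ⊤) :
    ∫⁻ x, ENNReal.ofReal (c x * (U x - V x) ^ 2) ∂ν < ⊤ := by
  have hb : ∀ x, ENNReal.ofReal (c x * (U x - V x) ^ 2)
      ≤ 2 * (ENNReal.ofReal (c x * (U x) ^ 2) + ENNReal.ofReal (c x * (V x) ^ 2)) := by
    intro x
    have h2 : c x * (U x - V x) ^ 2 ≤ 2 * (c x * (U x) ^ 2 + c x * (V x) ^ 2) := by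
      nlinarith [mul_nonneg (hc x) (sq_nonneg (U x + V x))]
    calc ENNReal.ofReal (c x * (U x - V x) ^ 2)
        ≤ ENNReal.ofReal (2 * (c x * (U x) ^ 2 + c x * (V x) ^ 2)) := ENNReal.ofReal_le_ofReal h2
      _ = 2 * (ENNReal.ofReal (c x * (U x) ^ 2) + ENNReal.ofReal (c x * (V x) ^ 2)) := by
          rw [ENNReal.ofReal_mul (by norm_num),
            ENNReal.ofReal_add (mul_nonneg (hc x) (sq_nonneg _)) (mul_nonneg (hc x) (sq_nonneg _))]
          norm_num
  calc (∫⁻ x, ENNReal.ofReal (c x * (U x - V x) ^ 2) ∂ν)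
      ≤ ∫⁻ x, 2 * (ENNReal.ofReal (c x * (U x) ^ 2) + ENNReal.ofReal (c x * (V x) ^ 2)) ∂ν :=
        lintegral_mono hb
    _ = 2 * ((∫⁻ x, ENNReal.ofReal (c x * (U x) ^ 2) ∂ν)
        + ∫⁻ x, ENNReal.ofReal (c x * (V x) ^ 2) ∂ν) := by
        rw [lintegral_const_mul' _ _ (by norm_num), lintegral_add_left hm.ennreal_ofReal]
    _ < ⊤ := ENNReal.mul_lt_top (by norm_num) (ENNReal.add_lt_top.mpr ⟨hU, hV⟩)

lemma aux_int {X : Type*} [MeasurableSpace X] (ν : Measure X) (c A B : X → ℝ)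
    (hc : ∀ x, 0 ≤ c x)
    (hmA : Measurable fun x => c x * (A x) ^ 2)
    (hmB : Measurable fun x => c x * (B x) ^ 2)
    (hmAB : Measurable fun x => c x * (A x * B x))
    (hA : ∫⁻ x, ENNReal.ofReal (c x * (A x) ^ 2) ∂ν < ⊤)
    (hB : ∫⁻ x, ENNReal.ofReal (c x * (B x) ^ 2) ∂ν < ⊤) :
    Integrable (fun x => c x * (A x * B x)) ν := by
  refine ⟨hmAB.aestronglyMeasurable, ?_⟩
  rw [hasFiniteIntegral_iff_norm]
  have hb : ∀ x, ENNReal.ofReal ‖c x * (A x * B x)‖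
      ≤ ENNReal.ofReal (c x * (A x) ^ 2) + ENNReal.ofReal (c x * (B x) ^ 2) := by
    intro x
    have h1 : ‖c x * (A x * B x)‖ ≤ c x * (A x) ^ 2 + c x * (B x) ^ 2 := by
      rw [Real.norm_eq_abs, abs_mul, abs_of_nonneg (hc x), abs_mul]
      nlinarith [mul_nonneg (hc x) (sq_nonneg (|A x| - |B x|)), sq_abs (A x), sq_abs (B x),
        hc x, abs_nonneg (A x), abs_nonneg (B x)]
    calc ENNReal.ofReal ‖c x * (A x * B x)‖
        ≤ ENNReal.ofReal (c x * (A x) ^ 2 + c x * (B x) ^ 2) := ENNReal.ofReal_le_ofReal h1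
      _ = _ := ENNReal.ofReal_add (mul_nonneg (hc x) (sq_nonneg _)) (mul_nonneg (hc x) (sq_nonneg _))
  calc (∫⁻ x, ENNReal.ofReal ‖c x * (A x * B x)‖ ∂ν)
      ≤ ∫⁻ x, (ENNReal.ofReal (c x * (A x) ^ 2) + ENNReal.ofReal (c x * (B x) ^ 2)) ∂ν :=
        lintegral_mono hb
    _ = _ + _ := lintegral_add_left hmA.ennreal_ofReal _
    _ < ⊤ := ENNReal.add_lt_top.mpr ⟨hA, hB⟩

lemma cna_pos (p n : ℕ) [Fact p.Prime] (α : ℝ) (hα : 0 < α) : 0 < cna p n α := by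
  have hp : (1 : ℝ) < p := by exact_mod_cast (Fact.out : p.Prime).one_lt
  apply div_pos
  · rw [sub_pos]
    exact (Real.one_lt_rpow_iff_of_pos (x := (p:ℝ)) (y := α) (by linarith)).mpr (Or.inl ⟨hp, hα⟩)
  · rw [sub_pos]
    apply Real.rpow_lt_one_of_one_lt_of_neg hp
    have : (0:ℝ) ≤ n := Nat.cast_nonneg n
    linarith

lemma bball_eq (p : ℕ) [Fact p.Prime] (n : ℕ) (N : ℤ) :
    Bball p n N = Metric.ball 0 ((p : ℝ) ^ (N + 1)) := by
  have hp : (1 : ℝ) < p := by exact_mod_cast (Fact.out : p.Prime).one_lt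
  have h0 : (0:ℝ) < (p : ℝ) ^ N := zpow_pos (by linarith) _
  have h1 : (0:ℝ) < (p : ℝ) ^ (N + 1) := zpow_pos (by linarith) _
  ext x
  simp only [Bball, Set.mem_setOf_eq, Metric.mem_ball, dist_zero_right]
  constructor
  · intro h
    rw [pi_norm_lt_iff h1]
    intro i
    exact (Padic.norm_le_pow_iff_norm_lt_pow_add_one (x i) N).mp
      ((pi_norm_le_iff_of_nonneg h0.le).mp h i)
  · intro h
    rw [pi_norm_le_iff_of_nonneg h0.le]
    intro i
    exact (Padic.norm_le_pow_iff_norm_lt_pow_add_one (x i) N).mpr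
      ((pi_norm_lt_iff h1).mp h i)

lemma measurableSet_bball (p : ℕ) [Fact p.Prime] (n : ℕ) (N : ℤ) :
    MeasurableSet (Bball p n N) := by
  rw [bball_eq]; exact measurableSet_ball

instance (p : ℕ) [Fact p.Prime] (n : ℕ) : SigmaFinite (padicHaarN p n) := by
  unfold padicHaarN padicHaar; infer_instance

lemma bball_pos (p : ℕ) [Fact p.Prime] (n : ℕ) (N : ℤ) :
    0 < padicHaarN p n (Bball p n N) := by
  have hp : (1 : ℝ) < p := by exact_mod_cast (Fact.out : p.Prime).one_lt
  have : (padicHaarN p n).IsOpenPosMeasure := by unfold padicHaarN padicHaar; infer_instance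
  rw [bball_eq]
  exact Metric.isOpen_ball.measure_pos _ ⟨0, Metric.mem_ball_self (zpow_pos (by linarith) _)⟩

lemma normSqH_split (p : ℕ) [Fact p.Prime] (n : ℕ) (α : ℝ) (N : ℤ)
    (ρ u : (Fin n → ℚ_[p]) → ℝ) (h : normSqH p n α N ρ u < ⊤) :
    (∫⁻ x in Bball p n N, ENNReal.ofReal ((u x) ^ 2) ∂padicHaarN p n) < ⊤ ∧
    (∫⁻ x in (Bball p n N)ᶜ, ENNReal.ofReal (|ρ x| * (u x) ^ 2) ∂padicHaarN p n) < ⊤ ∧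
    (∫⁻ z in ((Bball p n N)ᶜ ×ˢ (Bball p n N)ᶜ)ᶜ,
      ENNReal.ofReal ((u z.1 - u z.2) ^ 2 / ‖z.1 - z.2‖ ^ ((n : ℝ) + α))
      ∂((padicHaarN p n).prod (padicHaarN p n))) < ⊤ := by
  have h' := h
  unfold normSqH at h'
  rw [ENNReal.add_lt_top, ENNReal.add_lt_top] at h'
  exact ⟨h'.1.1, h'.1.2, h'.2⟩

lemma kernel_measurable (p : ℕ) [Fact p.Prime] (n : ℕ) (α : ℝ) (hα : 0 < α) :
    Measurable (fun z : (Fin n → ℚ_[p]) × (Fin n → ℚ_[p]) => ‖z.1 - z.2‖ ^ ((n : ℝ) + α)) := by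
  have hcont : Continuous (fun z : (Fin n → ℚ_[p]) × (Fin n → ℚ_[p]) => ‖z.1 - z.2‖ ^ ((n : ℝ) + α)) :=
    ((continuous_fst.sub continuous_snd).norm).rpow_const (fun z => Or.inr (by positivity))
  exact hcont.measurable

lemma memH_sub (p : ℕ) [Fact p.Prime] (n : ℕ) (α : ℝ) (hα : 0 < α) (N : ℤ)
    (g u₁ u₂ : (Fin n → ℚ_[p]) → ℝ) (hgmeas : Measurable g)
    (h₁ : MemH p n α N g u₁) (h₂ : MemH p n α N g u₂) :
    MemH p n α N g (fun x => u₁ x - u₂ x) := by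
  obtain ⟨A1, A2, A3⟩ := normSqH_split p n α N g u₁ h₁.2
  obtain ⟨B1, B2, B3⟩ := normSqH_split p n α N g u₂ h₂.2
  have hKm := kernel_measurable p n α hα
  have hKnn : ∀ z : (Fin n → ℚ_[p]) × (Fin n → ℚ_[p]),
      (0:ℝ) ≤ ‖z.1 - z.2‖ ^ ((n : ℝ) + α) := fun z => Real.rpow_nonneg (norm_nonneg _) _
  refine ⟨h₁.1.sub h₂.1, ?_⟩
  unfold normSqH
  rw [ENNReal.add_lt_top, ENNReal.add_lt_top]
  refine ⟨⟨?_, ?_⟩, ?_⟩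
  · have key := aux_fin ((padicHaarN p n).restrict (Bball p n N)) (fun _ => (1:ℝ)) u₁ u₂
      (fun _ => zero_le_one) ((h₁.1.pow_const 2).const_mul 1) ((h₂.1.pow_const 2).const_mul 1)
      (by simpa using A1) (by simpa using B1)
    simpa using key
  · exact aux_fin ((padicHaarN p n).restrict (Bball p n N)ᶜ) (fun x => |g x|) u₁ u₂
      (fun x => abs_nonneg _) (hgmeas.abs.mul (h₁.1.pow_const 2))
      (hgmeas.abs.mul (h₂.1.pow_const 2)) A2 B2
  · simp only [div_eq_inv_mul] at A3 B3 ⊢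
    have key := aux_fin (((padicHaarN p n).prod (padicHaarN p n)).restrict
        (((Bball p n N)ᶜ ×ˢ (Bball p n N)ᶜ)ᶜ))
      (fun z => (‖z.1 - z.2‖ ^ ((n : ℝ) + α))⁻¹)
      (fun z => u₁ z.1 - u₁ z.2) (fun z => u₂ z.1 - u₂ z.2)
      (fun z => inv_nonneg.mpr (hKnn z))
      (hKm.inv.mul (((h₁.1.comp measurable_fst).sub (h₁.1.comp measurable_snd)).pow_const 2))
      (hKm.inv.mul (((h₂.1.comp measurable_fst).sub (h₂.1.comp measurable_snd)).pow_const 2))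
      A3 B3
    refine lt_of_eq_of_lt (lintegral_congr fun z => ?_) key
    congr 1
    ring

/-- Uniqueness: two weak solutions of the Neumann problem
`D^{α,n}u = f` on `Ω`, `N_α u = g` on `Ω^c` differ a.e. by an additive constant. -/
theorem padic_neumann_uniqueness (p : ℕ) [Fact p.Prime] (n : ℕ) (hn : 1 ≤ n)
    (α : ℝ) (hα : 0 < α) (N : ℤ)
    (f g : (Fin n → ℚ_[p]) → ℝ)
    (hfmeas : Measurable f)
    (hfL2 : (∫⁻ x in Bball p n N, ENNReal.ofReal ((f x) ^ 2) ∂padicHaarN p n) < ⊤)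
    (hgmeas : Measurable g)
    (hgL1 : IntegrableOn g (Bball p n N)ᶜ (padicHaarN p n))
    (u₁ u₂ : (Fin n → ℚ_[p]) → ℝ)
    (hu₁ : IsWeakSolution p n α N f g u₁)
    (hu₂ : IsWeakSolution p n α N f g u₂) :
    ∃ c : ℝ, ∀ᵐ x ∂padicHaarN p n, u₁ x - u₂ x = c := by
  classical
  obtain ⟨hmem₁, hvar₁⟩ := hu₁
  obtain ⟨hmem₂, hvar₂⟩ := hu₂
  set μ := padicHaarN p n with hμdef
  set Ω := Bball p n N with hΩdef
  set R := ((Bball p n N)ᶜ ×ˢ (Bball p n N)ᶜ)ᶜ with hRdef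
  have hKm := kernel_measurable p n α hα
  have hKnn : ∀ z : (Fin n → ℚ_[p]) × (Fin n → ℚ_[p]),
      (0:ℝ) ≤ ‖z.1 - z.2‖ ^ ((n : ℝ) + α) := fun z => Real.rpow_nonneg (norm_nonneg _) _
  set w : (Fin n → ℚ_[p]) → ℝ := fun x => u₁ x - u₂ x with hwdef
  have hwm : Measurable w := hmem₁.1.sub hmem₂.1
  have hw : MemH p n α N g w := memH_sub p n α hα N g u₁ u₂ hgmeas hmem₁ hmem₂
  obtain ⟨W1, W2, W3⟩ := normSqH_split p n α N g w hw.2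
  obtain ⟨A1, A2, A3⟩ := normSqH_split p n α N g u₁ hmem₁.2
  obtain ⟨B1, B2, B3⟩ := normSqH_split p n α N g u₂ hmem₂.2
  have hcc : cna p n α / 2 ≠ 0 := (div_pos (cna_pos p n α hα) two_pos).ne'
  have eI := mul_left_cancel₀ hcc ((hvar₁ w hw).trans (hvar₂ w hw).symm)
  -- integrability of the two bilinear integrands
  have hint : ∀ u : (Fin n → ℚ_[p]) → ℝ, Measurable u →
      (∫⁻ z in R, ENNReal.ofReal ((u z.1 - u z.2) ^ 2 / ‖z.1 - z.2‖ ^ ((n : ℝ) + α))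
        ∂(μ.prod μ)) < ⊤ →
      Integrable (fun z : (Fin n → ℚ_[p]) × (Fin n → ℚ_[p]) =>
        (u z.1 - u z.2) * (w z.1 - w z.2) / ‖z.1 - z.2‖ ^ ((n : ℝ) + α))
        ((μ.prod μ).restrict R) := by
    intro u hum hufin
    have W3' := W3
    simp only [div_eq_inv_mul] at W3' hufin
    have key := aux_int ((μ.prod μ).restrict R)
      (fun z => (‖z.1 - z.2‖ ^ ((n : ℝ) + α))⁻¹)
      (fun z => u z.1 - u z.2) (fun z => w z.1 - w z.2)
      (fun z => inv_nonneg.mpr (hKnn z))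
      (hKm.inv.mul (((hum.comp measurable_fst).sub (hum.comp measurable_snd)).pow_const 2))
      (hKm.inv.mul (((hwm.comp measurable_fst).sub (hwm.comp measurable_snd)).pow_const 2))
      (hKm.inv.mul ((((hum.comp measurable_fst).sub (hum.comp measurable_snd)).mul
        ((hwm.comp measurable_fst).sub (hwm.comp measurable_snd)))))
      hufin W3'
    exact key.congr (Filter.Eventually.of_forall fun z => by ring)
  have hint₁ := hint u₁ hmem₁.1 A3
  have hint₂ := hint u₂ hmem₂.1 B3
  -- the quadratic form of w vanishes
  have hq0 : (∫ z in R, (w z.1 - w z.2) ^ 2 / ‖z.1 - z.2‖ ^ ((n : ℝ) + α) ∂(μ.prod μ)) = 0 := by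
    calc (∫ z in R, (w z.1 - w z.2) ^ 2 / ‖z.1 - z.2‖ ^ ((n : ℝ) + α) ∂(μ.prod μ))
        = ∫ z in R, ((u₁ z.1 - u₁ z.2) * (w z.1 - w z.2) / ‖z.1 - z.2‖ ^ ((n : ℝ) + α)
            - (u₂ z.1 - u₂ z.2) * (w z.1 - w z.2) / ‖z.1 - z.2‖ ^ ((n : ℝ) + α)) ∂(μ.prod μ) := by
          refine integral_congr_ae (Filter.Eventually.of_forall fun z => ?_)
          simp only [hwdef]
          ring
      _ = (∫ z in R, (u₁ z.1 - u₁ z.2) * (w z.1 - w z.2) / ‖z.1 - z.2‖ ^ ((n : ℝ) + α) ∂(μ.prod μ))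
          - ∫ z in R, (u₂ z.1 - u₂ z.2) * (w z.1 - w z.2) / ‖z.1 - z.2‖ ^ ((n : ℝ) + α) ∂(μ.prod μ) :=
          integral_sub hint₁ hint₂
      _ = 0 := sub_eq_zero_of_eq eI
  have hqint : Integrable (fun z : (Fin n → ℚ_[p]) × (Fin n → ℚ_[p]) =>
      (w z.1 - w z.2) ^ 2 / ‖z.1 - z.2‖ ^ ((n : ℝ) + α)) ((μ.prod μ).restrict R) := by
    refine ⟨((((hwm.comp measurable_fst).sub (hwm.comp measurable_snd)).pow_const 2).div
      hKm).aestronglyMeasurable, ?_⟩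
    rw [hasFiniteIntegral_iff_norm]
    have : (∫⁻ z, ENNReal.ofReal ‖(w z.1 - w z.2) ^ 2 / ‖z.1 - z.2‖ ^ ((n : ℝ) + α)‖
        ∂((μ.prod μ).restrict R))
        = ∫⁻ z, ENNReal.ofReal ((w z.1 - w z.2) ^ 2 / ‖z.1 - z.2‖ ^ ((n : ℝ) + α))
        ∂((μ.prod μ).restrict R) := by
      refine lintegral_congr fun z => ?_
      rw [Real.norm_eq_abs, abs_of_nonneg (div_nonneg (sq_nonneg _) (hKnn z))]
    rw [this]
    exact W3
  have hq_ae := (integral_eq_zero_iff_of_nonneg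
    (fun z => div_nonneg (sq_nonneg _) (hKnn z)) hqint).mp hq0
  have hae : ∀ᵐ z ∂((μ.prod μ).restrict R), w z.1 = w z.2 := by
    filter_upwards [hq_ae] with z hz
    simp only [Pi.zero_apply] at hz
    rcases eq_or_ne z.1 z.2 with h | h
    · rw [h]
    · have hKpos : (0:ℝ) < ‖z.1 - z.2‖ ^ ((n : ℝ) + α) :=
        Real.rpow_pos_of_pos (norm_pos_iff.mpr (sub_ne_zero.mpr h)) _
      have h2 : (w z.1 - w z.2) ^ 2 = 0 := by
        rcases div_eq_zero_iff.mp hz with h' | h'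
        · exact h'
        · exact absurd h' hKpos.ne'
      have := pow_eq_zero_iff (two_ne_zero) |>.mp h2
      exact sub_eq_zero.mp this
  have hRm : MeasurableSet R :=
    ((measurableSet_bball p n N).compl.prod (measurableSet_bball p n N).compl).compl
  rw [ae_restrict_iff' hRm] at hae
  set T : Set ((Fin n → ℚ_[p]) × (Fin n → ℚ_[p])) :=
    (Ω ×ˢ (Set.univ : Set (Fin n → ℚ_[p]))) ∩ {z | w z.1 ≠ w z.2} with hTdef
  have hTnull : (μ.prod μ) T = 0 := by
    refine measure_mono_null ?_ (ae_iff.mp hae)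
    rintro ⟨x, y⟩ ⟨⟨hx, -⟩, hne⟩
    simp only [Set.mem_setOf_eq]
    intro himp
    refine hne (himp ?_)
    intro hmem
    exact hmem.1 hx
  have hsec := Measure.measure_ae_null_of_prod_null hTnull
  have hex : ∃ x₀ ∈ Ω, μ (Prod.mk x₀ ⁻¹' T) = 0 := by
    by_contra hcon
    push_neg at hcon
    have hsub2 : Ω ⊆ {x | ¬ (μ (Prod.mk x ⁻¹' T) = 0)} := fun x hx => hcon x hx
    have hnull0 : μ {x | ¬ (μ (Prod.mk x ⁻¹' T) = 0)} = 0 := by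
      have := ae_iff.mp hsec
      simpa using this
    exact absurd (measure_mono_null hsub2 hnull0) (bball_pos p n N).ne'
  obtain ⟨x₀, hx₀, hnull⟩ := hex
  refine ⟨w x₀, ?_⟩
  have hfinal : μ {y | ¬ (u₁ y - u₂ y = w x₀)} = 0 := by
    refine measure_mono_null ?_ hnull
    intro y hy
    refine ⟨⟨hx₀, trivial⟩, ?_⟩
    intro hEq
    apply hy
    have : w y = u₁ y - u₂ y := by simp [hwdef]
    rw [← this, ← hEq]
  exact ae_iff.mpr hfinal
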